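/- arXiv:1904.10843 — 3 statements merged into one kernel-verified Lean document; each statement's English description precedes it below -/
import Mathlib

section
/- After κ iterations of the max-consensus protocol, each node holds the maximum of the initial values over all vertices reachable from it by a walk of length at most κ: for every κ and every vertex i, w κ i equals the maximum of w₀ j over all j ∈ V such that there exists a walk in G from i to j of length at most κ. -/
open Classical in
theorem max_consensus_eq_max_over_walks
    {V : Type*} [Fintype V] [Nonempty V] [DecidableEq V]
    (G : SimpleGraph V) [DecidableRel G.Adj]
    (w₀ : V → ℝ) (w : ℕ → V → ℝ)
    (h0 : w 0 = w₀)
    (hstep : ∀ (κ : ℕ) (i : V), w (κ + 1) i =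
      (insert i (G.neighborFinset i)).sup' (Finset.insert_nonempty i _) (w κ)) :
    ∀ (κ : ℕ) (i : V), w κ i =
      (Finset.univ.filter (fun j => ∃ p : G.Walk i j, p.length ≤ κ)).sup'
        ⟨i, Finset.mem_filter.mpr ⟨Finset.mem_univ i, ⟨SimpleGraph.Walk.nil, by simp⟩⟩⟩
        w₀ := by
  intro κ
  induction κ with
  | zero =>
    intro i
    have hset : (Finset.univ.filter (fun j => ∃ p : G.Walk i j, p.length ≤ 0)) = {i} := by
      ext j
      simp only [Finset.mem_filter, Finset.mem_univ, true_and, Finset.mem_singleton]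
      constructor
      · rintro ⟨p, hp⟩
        have : p.length = 0 := Nat.le_zero.mp hp
        exact (SimpleGraph.Walk.eq_of_length_eq_zero this).symm
      · rintro rfl; exact ⟨SimpleGraph.Walk.nil, by simp⟩
    rw [h0]
    apply le_antisymm
    · exact Finset.le_sup' w₀ (by rw [hset]; exact Finset.mem_singleton_self i)
    · apply Finset.sup'_le
      intro j hj
      rw [hset, Finset.mem_singleton] at hj
      rw [hj]
  | succ κ ih =>
    intro i
    rw [hstep κ i]
    apply le_antisymm
    · apply Finset.sup'_le
      intro j hj
      rw [ih j]
      apply Finset.sup'_le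
      intro k hk
      obtain ⟨p, hp⟩ := (Finset.mem_filter.mp hk).2
      apply Finset.le_sup'
      simp only [Finset.mem_filter, Finset.mem_univ, true_and]
      rcases Finset.mem_insert.mp hj with rfl | hj'
      · exact ⟨p, le_trans hp (Nat.le_succ κ)⟩
      · have hadj : G.Adj i j := (SimpleGraph.mem_neighborFinset G i j).mp hj'
        exact ⟨SimpleGraph.Walk.cons hadj p, by simpa using Nat.succ_le_succ hp⟩
    · apply Finset.sup'_le
      intro k hk
      obtain ⟨p, hp⟩ := (Finset.mem_filter.mp hk).2
      cases p with
      | nil =>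
        refine le_trans ?_ (Finset.le_sup' (w κ) (Finset.mem_insert_self i _))
        rw [ih i]
        exact Finset.le_sup' _ (Finset.mem_filter.mpr ⟨Finset.mem_univ i,
          ⟨SimpleGraph.Walk.nil, by simp⟩⟩)
      | cons hadj q =>
        rename_i j
        have hj : j ∈ insert i (G.neighborFinset i) :=
          Finset.mem_insert.mpr (Or.inr ((SimpleGraph.mem_neighborFinset G i j).mpr hadj))
        refine le_trans ?_ (Finset.le_sup' (w κ) hj)
        rw [ih j]
        refine Finset.le_sup' _ (Finset.mem_filter.mpr ⟨Finset.mem_univ k, ⟨q, ?_⟩⟩)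
        simpa using Nat.succ_le_succ_iff.mp (by simpa using hp)
end

section
/- (Quantitative convergence bound underlying Proposition 1) If the communication graph G is connected and κ is any natural number such that the graph distance G.dist i j ≤ κ for all pairs of vertices i, j (i.e., κ is at least the diameter of G), then after κ iterations every node holds the global maximum: for all vertices i, w κ i = max over j ∈ V of w₀ j. -/
theorem max_consensus_converges_within_diameter
    {V : Type*} [Fintype V] [Nonempty V] [DecidableEq V]
    (G : SimpleGraph V) [DecidableRel G.Adj]
    (hconn : G.Connected)
    (w₀ : V → ℝ) (w : ℕ → V → ℝ)
    (h0 : w 0 = w₀)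
    (hstep : ∀ (κ : ℕ) (i : V), w (κ + 1) i =
      (insert i (G.neighborFinset i)).sup' (Finset.insert_nonempty i _) (w κ))
    (κ : ℕ) (hdiam : ∀ i j : V, G.dist i j ≤ κ) :
    ∀ i : V, w κ i = Finset.univ.sup' Finset.univ_nonempty w₀ := by
  -- upper bound
  have hub : ∀ n i, w n i ≤ Finset.univ.sup' Finset.univ_nonempty w₀ := by
    intro n
    induction n with
    | zero => intro i; rw [h0]; exact Finset.le_sup' w₀ (Finset.mem_univ i)
    | succ n ih =>
      intro i
      rw [hstep]
      exact Finset.sup'_le _ _ fun j _ => ih j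
  -- monotone in time
  have hmono : ∀ n i, w n i ≤ w (n + 1) i := by
    intro n i
    rw [hstep]
    exact Finset.le_sup' (w n) (Finset.mem_insert_self i _)
  have hmono' : ∀ {m n : ℕ}, m ≤ n → ∀ i, w m i ≤ w n i := by
    intro m n h i
    induction h with
    | refl => exact le_rfl
    | step h ih => exact le_trans ih (hmono _ i)
  -- walk lemma
  have hwalk : ∀ {i j : V} (p : G.Walk i j), w₀ j ≤ w p.length i := by
    intro i j p
    induction p with
    | nil => simp [h0]
    | @cons a b c hab p ih =>
      calc w₀ c ≤ w p.length b := ih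
        _ ≤ w (p.length + 1) a := by
            rw [hstep]
            exact Finset.le_sup' (w p.length)
              (Finset.mem_insert_of_mem (by rwa [SimpleGraph.mem_neighborFinset]))
  intro i
  refine le_antisymm (hub κ i) (Finset.sup'_le _ _ fun j _ => ?_)
  obtain ⟨p, hp⟩ := hconn.exists_walk_length_eq_dist i j
  calc w₀ j ≤ w p.length i := hwalk p
    _ ≤ w κ i := hmono' (by rw [hp]; exact hdiam i j) i
end

section
/- (Distributed enabling rule is well defined) If the communication graph G is connected and the initial values are pairwise distinct, then after consensus each node can locally decide the unique enabled module: there exists κ̄ such that for all κ ≥ κ̄ there is a unique vertex i with w₀ i = w κ i; moreover this unique i is the vertex attaining the maximum of w₀ over V. -/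
theorem distributed_enabling_well_defined
    {V : Type*} [Fintype V] [Nonempty V] [DecidableEq V]
    (G : SimpleGraph V) [DecidableRel G.Adj]
    (hconn : G.Connected)
    (w₀ : V → ℝ)
    (hdist : ∀ i j : V, i ≠ j → w₀ i ≠ w₀ j)
    (w : ℕ → V → ℝ)
    (h0 : w 0 = w₀)
    (hstep : ∀ (κ : ℕ) (i : V), w (κ + 1) i =
      (insert i (G.neighborFinset i)).sup' (Finset.insert_nonempty i _) (w κ)) :
    ∃ κbar : ℕ, ∀ κ ≥ κbar,
      (∃! i : V, w₀ i = w κ i) ∧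
      (∀ i : V, w₀ i = w κ i →
        w₀ i = Finset.univ.sup' Finset.univ_nonempty w₀) := by
  set M := Finset.univ.sup' Finset.univ_nonempty w₀ with hM
  obtain ⟨j, -, hj⟩ := Finset.exists_mem_eq_sup' (Finset.univ_nonempty (α := V)) w₀
  have hub : ∀ κ i, w κ i ≤ M := by
    intro κ
    induction κ with
    | zero => intro i; rw [h0]; exact Finset.le_sup' _ (Finset.mem_univ i)
    | succ κ ih => intro i; rw [hstep]; exact Finset.sup'_le _ _ fun k _ => ih k
  have hmono : ∀ κ i, w κ i ≤ w (κ + 1) i := by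
    intro κ i; rw [hstep]; exact Finset.le_sup' _ (Finset.mem_insert_self i _)
  have hmono' : ∀ (i : V) {m κ : ℕ}, m ≤ κ → w m i ≤ w κ i := by
    intro i m κ h
    induction h with
    | refl => exact le_rfl
    | step _ ih => exact ih.trans (hmono _ i)
  have hwalk : ∀ {a b : V} (p : G.Walk a b), w₀ b ≤ w p.length a := by
    intro a b p
    induction p with
    | nil => simp only [SimpleGraph.Walk.length_nil, h0]; exact le_rfl
    | cons hadj q ih =>
      rw [SimpleGraph.Walk.length_cons, hstep]
      exact le_trans ih (Finset.le_sup' _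
        (Finset.mem_insert_of_mem ((G.mem_neighborFinset _ _).mpr hadj)))
  have hall : ∀ κ ≥ Fintype.card V, ∀ i, w κ i = M := by
    intro κ hκ i
    refine le_antisymm (hub κ i) ?_
    obtain ⟨p⟩ := hconn.preconnected i j
    have hlen : (p.toPath : G.Walk i j).length < Fintype.card V :=
      (p.toPath).2.length_lt
    calc M = w₀ j := hj
      _ ≤ w (p.toPath : G.Walk i j).length i := hwalk _
      _ ≤ w κ i := hmono' i (le_trans hlen.le hκ)
  refine ⟨Fintype.card V, fun κ hκ => ⟨⟨j, ?_, ?_⟩, ?_⟩⟩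
  · show w₀ j = w κ j
    rw [hall κ hκ j]; exact hj.symm
  · intro i hi
    by_contra hne
    rw [hall κ hκ i] at hi
    exact hdist i j hne (hi.trans hj)
  · intro i hi
    rw [hi]; exact hall κ hκ i
end
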